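/- Let q be a prime power, n ≥ 2, and ℓ a prime dividing neither q nor q−1 (equivalently ℓ ∤ q and d_ℓ(q) > 1). Let k be an algebraically closed field of characteristic ℓ. If M is an indecomposable endotrivial k[GL_n(F_q)]-module whose restriction to SL_n(F_q) is isomorphic to the direct sum of the trivial module k and a projective k[SL_n(F_q)]-module, then dim_k M = 1. -/

import Mathlib

universe u

/-- A finite-dimensional `kG`-module `V` (given as a representation `ρ`) is *endotrivial*
if `V ⊗ V* ≅ k ⊕ P` as `kG`-modules, with `P` a projective `kG`-module. -/
def Representation.IsEndotrivial {k G : Type*} {V : Type u} [Field k] [Group G]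
    [AddCommGroup V] [Module k V] (ρ : Representation k G V) : Prop :=
  ∃ (P : Type u) (_ : AddCommGroup P) (_ : Module k P) (π : Representation k G P),
    Module.Projective (MonoidAlgebra k G) π.asModule ∧
    ∃ e : TensorProduct k V (Module.Dual k V) ≃ₗ[k] k × P,
      ∀ (g : G) (x : TensorProduct k V (Module.Dual k V)),
        e ((ρ.tprod ρ.dual) g x) = ((e x).1, π g (e x).2)

/-- A `kG`-module is *indecomposable* if it is nonzero and is not the (internal) direct sum
of two nonzero submodules. -/
def Representation.IsIndecomposable {k G : Type*} {V : Type u} [Field k] [Group G]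
    [AddCommGroup V] [Module k V] (ρ : Representation k G V) : Prop :=
  Nontrivial V ∧ ∀ W₁ W₂ : Submodule (MonoidAlgebra k G) ρ.asModule,
    IsCompl W₁ W₂ → W₁ = ⊥ ∨ W₂ = ⊥

section Aux

variable {k G : Type*} {V : Type u} [Field k] [Group G] [AddCommGroup V] [Module k V]

/-- A `k`-linear endomorphism commuting with the group action commutes with the whole
monoid algebra action. -/
lemma aux_commuting_linear (ρ : Representation k G V) (f : V →ₗ[k] V)
    (h : ∀ (g : G) (x : V), f (ρ g x) = ρ g (f x)) (r : MonoidAlgebra k G) (x : V) :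
    f (ρ.asAlgebraHom r x) = ρ.asAlgebraHom r (f x) := by
  induction r using MonoidAlgebra.induction_on with
  | of g => simpa [Representation.asAlgebraHom_of] using h g x
  | add p q hp hq => simp [map_add, LinearMap.add_apply, hp, hq]
  | smul r p hp => simp [map_smul, LinearMap.smul_apply, hp]

/-- The abstract skeleton of the argument: a representation of a group `G`, indecomposable,
with a normal subgroup `S` such that `G` is generated by `S` and a single element `g₀` whose
`N`-th power lies in `S`, possessing an `S`-fixed vector `n₀` and an `S`-invariant functional
`lam` pairing to `1`, is one-dimensional (provided `k` has enough `N`-th roots of unity). -/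
lemma aux_dim_one [FiniteDimensional k V] (ρ : Representation k G V)
    (hindec : ρ.IsIndecomposable)
    (N : ℕ) (hN : 0 < N) (hNk : (N : k) ≠ 0) (ω : k) (hω : IsPrimitiveRoot ω N)
    (S : Subgroup G) (hSn : S.Normal) (g₀ : G)
    (hg₀ : ∀ g : G, ∃ m : ℕ, g * (g₀ ^ m)⁻¹ ∈ S)
    (hg₀N : g₀ ^ N ∈ S)
    (n₀ : V) (lam : V →ₗ[k] k) (hlam : lam n₀ = 1)
    (hfix : ∀ s ∈ S, ρ s n₀ = n₀)
    (hinv : ∀ s ∈ S, ∀ x : V, lam (ρ s x) = lam x) :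
    Module.finrank k V = 1 := by
  classical
  obtain ⟨N', rfl⟩ : ∃ N', N = N' + 1 := ⟨N - 1, (Nat.succ_pred_eq_of_pos hN).symm⟩
  set N := N' + 1 with hNdef
  set τ := ω⁻¹ with hτdef
  have hωN : ω ^ N = 1 := hω.pow_eq_one
  have hω0 : ω ≠ 0 := by
    intro h
    rw [h, zero_pow hN.ne'] at hωN
    exact zero_ne_one hωN
  have hωτ : ω * τ = 1 := mul_inv_cancel₀ hω0
  have hτN : τ ^ N = 1 := by rw [hτdef, inv_pow, hωN, inv_one]
  -- basic building blocks
  set w : ℕ → V := fun m => ρ (g₀ ^ m) n₀ with hwdef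
  set lm : ℕ → V →ₗ[k] k := fun m => lam ∘ₗ (ρ (g₀ ^ m)) with hlmdef
  set v : ℕ → V := fun j => ∑ m ∈ Finset.range N, τ ^ (j * m) • w m with hvdef
  set μ : ℕ → V →ₗ[k] k := fun j => ∑ m ∈ Finset.range N, τ ^ (j * m) • lm m with hμdef
  have hμapp : ∀ j x, μ j x = ∑ m ∈ Finset.range N, τ ^ (j * m) * lm m x := by
    intro j x
    simp [hμdef, LinearMap.sum_apply, LinearMap.smul_apply, smul_eq_mul]
  have hw0 : w 0 = n₀ := by simp [hwdef]
  have hwN : w N = n₀ := by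
    show ρ (g₀ ^ N) n₀ = n₀
    exact hfix _ hg₀N
  have hlm0 : ∀ x, lm 0 x = lam x := by intro x; simp [hlmdef]
  have hlmN : ∀ x, lm N x = lam x := by
    intro x
    show lam (ρ (g₀ ^ N) x) = lam x
    exact hinv _ hg₀N x
  have hmul : ∀ (a b : G) (y : V), ρ (a * b) y = ρ a (ρ b y) := by
    intro a b y; rw [map_mul]; rfl
  have hwfix : ∀ s ∈ S, ∀ m, ρ s (w m) = w m := by
    intro s hs m
    obtain ⟨t, ht, hts⟩ : ∃ t, t ∈ S ∧ s * g₀ ^ m = g₀ ^ m * t := by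
      refine ⟨(g₀ ^ m)⁻¹ * s * g₀ ^ m, ?_, by group⟩
      have := hSn.conj_mem s hs (g₀ ^ m)⁻¹
      rwa [inv_inv] at this
    calc ρ s (w m) = ρ (s * g₀ ^ m) n₀ := (hmul _ _ _).symm
      _ = ρ (g₀ ^ m) (ρ t n₀) := by rw [hts, hmul]
      _ = w m := by rw [hfix _ ht]
  have hlminv : ∀ s ∈ S, ∀ m x, lm m (ρ s x) = lm m x := by
    intro s hs m x
    obtain ⟨t, ht, hts⟩ : ∃ t, t ∈ S ∧ g₀ ^ m * s = t * g₀ ^ m :=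
      ⟨g₀ ^ m * s * (g₀ ^ m)⁻¹, hSn.conj_mem s hs (g₀ ^ m), by group⟩
    show lam (ρ (g₀ ^ m) (ρ s x)) = lam (ρ (g₀ ^ m) x)
    calc lam (ρ (g₀ ^ m) (ρ s x)) = lam (ρ (g₀ ^ m * s) x) := by rw [hmul]
      _ = lam (ρ t (ρ (g₀ ^ m) x)) := by rw [hts, hmul]
      _ = lam (ρ (g₀ ^ m) x) := hinv _ ht _
  have hwsucc : ∀ m, ρ g₀ (w m) = w (m + 1) := by
    intro m
    show ρ g₀ (ρ (g₀ ^ m) n₀) = ρ (g₀ ^ (m + 1)) n₀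
    rw [pow_succ', map_mul]; rfl
  have hlmsucc : ∀ m x, lm m (ρ g₀ x) = lm (m + 1) x := by
    intro m x
    show lam (ρ (g₀ ^ m) (ρ g₀ x)) = lam (ρ (g₀ ^ (m + 1)) x)
    rw [pow_succ, map_mul]; rfl
  -- the key exponent identity
  have hkey : ∀ j m : ℕ, ω ^ j * τ ^ (j * (m + 1)) = τ ^ (j * m) := by
    intro j m
    have h1 : τ ^ (j * (m + 1)) = τ ^ (j * m) * τ ^ j := by
      rw [← pow_add]; ring_nf
    rw [h1, show ω ^ j * (τ ^ (j * m) * τ ^ j) = (ω * τ) ^ j * τ ^ (j * m) by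
      rw [mul_pow]; ring, hωτ, one_pow, one_mul]
  have hboundary : ∀ j : ℕ, τ ^ (j * N') = ω ^ j := by
    intro j
    have h1 : τ ^ (j * N) = 1 := by
      rw [mul_comm, pow_mul, hτN, one_pow]
    have := hkey j N'
    rw [show j * (N' + 1) = j * N from rfl, h1, mul_one] at this
    exact this.symm
  -- eigenvector / eigenfunctional relations
  have hv_eig : ∀ j, ρ g₀ (v j) = ω ^ j • v j := by
    intro j
    have hL : ρ g₀ (v j) = ∑ m ∈ Finset.range N, τ ^ (j * m) • w (m + 1) := by
      rw [hvdef]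
      simp only [map_sum, map_smul]
      exact Finset.sum_congr rfl fun m _ => by rw [hwsucc]
    have hR : ω ^ j • v j = ∑ m ∈ Finset.range N, (ω ^ j * τ ^ (j * m)) • w m := by
      rw [hvdef, Finset.smul_sum]
      exact Finset.sum_congr rfl fun m _ => by rw [smul_smul]
    rw [hL, hR, Finset.sum_range_succ, Finset.sum_range_succ']
    congr 1
    · exact Finset.sum_congr rfl fun m _ => by rw [← hkey j m]
    · rw [hboundary j, hwN, hw0, Nat.mul_zero, pow_zero, mul_one]
  have hμ_eig : ∀ j x, μ j (ρ g₀ x) = ω ^ j * μ j x := by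
    intro j x
    have hL : μ j (ρ g₀ x) = ∑ m ∈ Finset.range N, τ ^ (j * m) * lm (m + 1) x := by
      rw [hμapp]
      exact Finset.sum_congr rfl fun m _ => by rw [hlmsucc]
    have hR : ω ^ j * μ j x = ∑ m ∈ Finset.range N, (ω ^ j * τ ^ (j * m)) * lm m x := by
      rw [hμapp, Finset.mul_sum]
      exact Finset.sum_congr rfl fun m _ => by ring
    rw [hL, hR, Finset.sum_range_succ, Finset.sum_range_succ']
    congr 1
    · exact Finset.sum_congr rfl fun m _ => by rw [← hkey j m]
    · rw [hboundary j, hlmN, hlm0, Nat.mul_zero, pow_zero, mul_one]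
  -- geometric sums
  have hτpow_ne : ∀ m : ℕ, 0 < m → m < N → τ ^ m ≠ 1 := by
    intro m hm1 hm2 h
    apply hω.pow_ne_one_of_pos_of_lt hm1.ne' hm2
    have : (ω * τ) ^ m = 1 := by rw [hωτ, one_pow]
    rw [mul_pow, h, mul_one] at this
    exact this
  have hgeom : ∀ m ∈ Finset.range N,
      (∑ j ∈ Finset.range N, τ ^ (j * m)) = if m = 0 then (N : k) else 0 := by
    intro m hm
    rcases Nat.eq_zero_or_pos m with hm0 | hm0
    · subst hm0
      simp
    · rw [if_neg hm0.ne']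
      have hsum : ∑ j ∈ Finset.range N, τ ^ (j * m) = ∑ j ∈ Finset.range N, (τ ^ m) ^ j := by
        exact Finset.sum_congr rfl fun j _ => by rw [← pow_mul, mul_comm]
      rw [hsum, geom_sum_eq (hτpow_ne m hm0 (Finset.mem_range.mp hm))]
      rw [← pow_mul, mul_comm m N, pow_mul, hτN, one_pow, sub_self, zero_div]
  have hμsum : ∑ j ∈ Finset.range N, μ j n₀ = (N : k) := by
    have h1 : ∑ j ∈ Finset.range N, μ j n₀
        = ∑ m ∈ Finset.range N, (∑ j ∈ Finset.range N, τ ^ (j * m)) * lm m n₀ := by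
      simp only [hμapp]
      rw [Finset.sum_comm]
      exact Finset.sum_congr rfl fun m _ => by rw [Finset.sum_mul]
    have h2 : ∀ m ∈ Finset.range N, (∑ j ∈ Finset.range N, τ ^ (j * m)) * lm m n₀
        = if m = 0 then (N : k) else 0 := by
      intro m hm
      rw [hgeom m hm]
      split_ifs with h
      · subst h; rw [hlm0, hlam, mul_one]
      · rw [zero_mul]
    rw [h1, Finset.sum_congr rfl h2, Finset.sum_ite_eq' (Finset.range N) 0 (fun _ => (N : k))]
    simp
  have hvsum : ∑ j ∈ Finset.range N, v j = (N : k) • n₀ := by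
    have h1 : ∑ j ∈ Finset.range N, v j
        = ∑ m ∈ Finset.range N, (∑ j ∈ Finset.range N, τ ^ (j * m)) • w m := by
      simp only [hvdef]
      rw [Finset.sum_comm]
      exact Finset.sum_congr rfl fun m _ => by rw [Finset.sum_smul]
    have h2 : ∀ m ∈ Finset.range N, (∑ j ∈ Finset.range N, τ ^ (j * m)) • w m
        = if m = 0 then (N : k) • n₀ else 0 := by
      intro m hm
      rw [hgeom m hm]
      split_ifs with h
      · subst h; rw [hw0]
      · rw [zero_smul]
    rw [h1, Finset.sum_congr rfl h2,
      Finset.sum_ite_eq' (Finset.range N) 0 (fun _ => (N : k) • n₀)]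
    simp
  -- choose the good eigenvalue index
  obtain ⟨j₀, hj₀mem, hj₀⟩ : ∃ j ∈ Finset.range N, μ j n₀ ≠ 0 := by
    apply Finset.exists_ne_zero_of_sum_ne_zero
    rw [hμsum]; exact hNk
  have hj₀N : j₀ < N := Finset.mem_range.mp hj₀mem
  -- orthogonality
  have horth : ∀ j' ∈ Finset.range N, j' ≠ j₀ → μ j₀ (v j') = 0 := by
    intro j' hj' hne
    have h1 : μ j₀ (ρ g₀ (v j')) = ω ^ j₀ * μ j₀ (v j') := hμ_eig j₀ (v j')
    have h2 : μ j₀ (ρ g₀ (v j')) = ω ^ j' * μ j₀ (v j') := by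
      rw [hv_eig j', map_smul, smul_eq_mul]
    have h3 : (ω ^ j₀ - ω ^ j') * μ j₀ (v j') = 0 := by
      rw [sub_mul, ← h1, ← h2, sub_self]
    rcases mul_eq_zero.mp h3 with h | h
    · exfalso
      exact hne (hω.pow_inj hj₀N (Finset.mem_range.mp hj') (sub_eq_zero.mp h)).symm
    · exact h
  have hc : μ j₀ (v j₀) = (N : k) * μ j₀ n₀ := by
    have h1 : μ j₀ (∑ j' ∈ Finset.range N, v j') = μ j₀ (v j₀) := by
      rw [map_sum]
      exact Finset.sum_eq_single_of_mem j₀ hj₀mem horth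
    rw [← h1, hvsum, map_smul, smul_eq_mul]
  set c : k := μ j₀ (v j₀) with hcdef
  have hc0 : c ≠ 0 := by rw [hc]; exact mul_ne_zero hNk hj₀
  have hv₀ne : v j₀ ≠ 0 := by
    intro h
    rw [hcdef, h, map_zero] at hc0
    exact hc0 rfl
  -- invariance of the chosen eigen pair
  have hvfix : ∀ s ∈ S, ρ s (v j₀) = v j₀ := by
    intro s hs
    rw [hvdef]
    simp only [map_sum, map_smul]
    exact Finset.sum_congr rfl fun m _ => by rw [hwfix s hs m]
  have hμfix : ∀ s ∈ S, ∀ x, μ j₀ (ρ s x) = μ j₀ x := by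
    intro s hs x
    rw [hμapp, hμapp]
    exact Finset.sum_congr rfl fun m _ => by rw [hlminv s hs m x]
  -- powers of g₀
  have hvpow : ∀ m : ℕ, ρ (g₀ ^ m) (v j₀) = (ω ^ j₀) ^ m • v j₀ := by
    intro m
    induction m with
    | zero => simp
    | succ m ih =>
      rw [pow_succ', hmul, ih, map_smul, hv_eig j₀, pow_succ, smul_smul, mul_comm]
  have hμpow : ∀ (m : ℕ) (x : V), μ j₀ (ρ (g₀ ^ m) x) = (ω ^ j₀) ^ m * μ j₀ x := by
    intro m x
    induction m with
    | zero => simp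
    | succ m ih =>
      rw [pow_succ', hmul, hμ_eig, ih, pow_succ]
      ring
  -- the equivariant projection
  set f : V →ₗ[k] V := c⁻¹ • ((μ j₀).smulRight (v j₀)) with hfdef
  have hfapp : ∀ x, f x = (c⁻¹ * μ j₀ x) • v j₀ := by
    intro x
    rw [hfdef]
    simp [LinearMap.smulRight_apply, smul_smul]
  have hcomm : ∀ (g : G) (x : V), f (ρ g x) = ρ g (f x) := by
    intro g x
    obtain ⟨m, hm⟩ := hg₀ g
    have hgdec : g = (g * (g₀ ^ m)⁻¹) * g₀ ^ m := by group
    have hμg : μ j₀ (ρ g x) = (ω ^ j₀) ^ m * μ j₀ x := by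
      conv_lhs => rw [hgdec]
      rw [hmul, hμfix _ hm, hμpow]
    have hvg : ρ g (v j₀) = (ω ^ j₀) ^ m • v j₀ := by
      conv_lhs => rw [hgdec]
      rw [hmul, hvpow, map_smul, hvfix _ hm]
    rw [hfapp, hfapp, hμg, map_smul, hvg, smul_smul]
    congr 1
    ring
  have hidem : ∀ x, f (f x) = f x := by
    intro x
    rw [hfapp, hfapp]
    rw [show (μ j₀) ((c⁻¹ * (μ j₀) x) • v j₀) = c⁻¹ * (μ j₀) x * c by
      rw [map_smul, smul_eq_mul, ← hcdef]]
    congr 1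
    field_simp
  have hfv : f (v j₀) = v j₀ := by
    rw [hfapp, ← hcdef, inv_mul_cancel₀ hc0, one_smul]
  -- pass to the monoid algebra
  have hAlg : ∀ (r : MonoidAlgebra k G) (x : V),
      f (ρ.asAlgebraHom r x) = ρ.asAlgebraHom r (f x) :=
    aux_commuting_linear ρ f hcomm
  let F : ρ.asModule →ₗ[MonoidAlgebra k G] ρ.asModule :=
    { toFun := fun x => ρ.asModuleEquiv.symm (f (ρ.asModuleEquiv x))
      map_add' := fun x y => by simp [map_add]
      map_smul' := fun r x => by exact hAlg r x }
  have hFapp : ∀ x : ρ.asModule, F x = f (ρ.asModuleEquiv x) := fun _ => rfl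
  have hFidem : ∀ x : ρ.asModule, F (F x) = F x := fun x => hidem _
  have hcompl : IsCompl (LinearMap.ker F) (LinearMap.range F) := by
    constructor
    · rw [disjoint_iff_inf_le]
      rintro x hx
      obtain ⟨hk, y, rfl⟩ := Submodule.mem_inf.mp hx
      rw [Submodule.mem_bot]
      rw [LinearMap.mem_ker, hFidem] at hk
      exact hk
    · rw [codisjoint_iff_le_sup]
      intro x _
      refine Submodule.mem_sup.mpr ⟨x - F x, ?_, F x, ⟨x, rfl⟩, by abel⟩
      rw [LinearMap.mem_ker, map_sub, hFidem, sub_self]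
  rcases hindec.2 _ _ hcompl with hker | hrange
  · -- F injective, so μ j₀ is injective and V is one-dimensional
    have hμinj : Function.Injective (μ j₀) := by
      rw [← LinearMap.ker_eq_bot]
      rw [Submodule.eq_bot_iff]
      intro x hx
      rw [LinearMap.mem_ker] at hx
      have hfx : F (ρ.asModuleEquiv.symm x) = 0 := by
        show ρ.asModuleEquiv.symm (f (ρ.asModuleEquiv (ρ.asModuleEquiv.symm x))) = 0
        rw [ρ.asModuleEquiv.apply_symm_apply]
        have hf0 : f x = 0 := by
          rw [hfapp, hx, mul_zero, zero_smul]
        rw [hf0, map_zero]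
      have hker' : ρ.asModuleEquiv.symm x ∈ LinearMap.ker F := LinearMap.mem_ker.mpr hfx
      rw [hker] at hker'
      have := (Submodule.mem_bot (MonoidAlgebra k G)).mp hker'
      have h0 : ρ.asModuleEquiv (ρ.asModuleEquiv.symm x) = ρ.asModuleEquiv 0 := by rw [this]
      rwa [ρ.asModuleEquiv.apply_symm_apply, map_zero] at h0
    have h1 : Module.finrank k V ≤ 1 := by
      have h := LinearMap.finrank_le_finrank_of_injective hμinj
      rwa [Module.finrank_self] at h
    have h2 : 0 < Module.finrank k V := by
      have : Nontrivial V := hindec.1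
      exact Module.finrank_pos
    omega
  · exfalso
    apply hv₀ne
    have hmem : ρ.asModuleEquiv.symm (v j₀) ∈ LinearMap.range F := by
      refine ⟨ρ.asModuleEquiv.symm (v j₀), ?_⟩
      show ρ.asModuleEquiv.symm (f (ρ.asModuleEquiv (ρ.asModuleEquiv.symm (v j₀)))) = _
      rw [ρ.asModuleEquiv.apply_symm_apply, hfv]
    rw [hrange] at hmem
    have h0 := (Submodule.mem_bot (MonoidAlgebra k G)).mp hmem
    have h1 : ρ.asModuleEquiv (ρ.asModuleEquiv.symm (v j₀)) = ρ.asModuleEquiv 0 := by rw [h0]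
    rwa [ρ.asModuleEquiv.apply_symm_apply, map_zero] at h1

end Aux

/-- **(From Corollary 3.9.)** Let `ℓ` be a prime dividing neither `q` nor `q − 1`. If `M` is
an indecomposable endotrivial `k[GLₙ(q)]`-module whose restriction to `SLₙ(q)` is the direct
sum of the trivial module and a projective module, then `M` is one-dimensional. -/
theorem endotrivial_GL_trivial_restriction_dim_one
    {ℓ q n : ℕ} (hℓ : ℓ.Prime) (hq : IsPrimePow q) (hn : 2 ≤ n)
    (hℓq : ¬ ℓ ∣ q) (hℓq1 : ¬ ℓ ∣ (q - 1))
    (F : Type*) [Field F] [Fintype F] (hF : Fintype.card F = q)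
    (k : Type*) [Field k] [IsAlgClosed k] [CharP k ℓ]
    (V : Type u) [AddCommGroup V] [Module k V] [FiniteDimensional k V]
    (ρ : Representation k (Matrix.GeneralLinearGroup (Fin n) F) V)
    (hindec : ρ.IsIndecomposable) (hendo : ρ.IsEndotrivial)
    (hres : ∃ (P : Type u) (_ : AddCommGroup P) (_ : Module k P)
      (π : Representation k (Matrix.SpecialLinearGroup (Fin n) F) P),
      Module.Projective (MonoidAlgebra k (Matrix.SpecialLinearGroup (Fin n) F)) π.asModule ∧
      ∃ e : V ≃ₗ[k] k × P, ∀ (g : Matrix.SpecialLinearGroup (Fin n) F) (v : V),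
        e ((ρ.comp Matrix.SpecialLinearGroup.toGL) g v) = ((e v).1, π g (e v).2)) :
    Module.finrank k V = 1 := by
  classical
  obtain ⟨P, _, _, π, hP, e, he⟩ := hres
  haveI : NeZero n := ⟨by omega⟩
  -- the field has q elements, so q ≥ 2 and N := q - 1 ≥ 1
  have hq2 : 2 ≤ q := hq.two_le
  set N : ℕ := q - 1 with hNdef
  have hN : 0 < N := by omega
  have hNk : (N : k) ≠ 0 := by
    intro h
    exact hℓq1 ((CharP.cast_eq_zero_iff k ℓ N).mp h)
  haveI : NeZero ((N : ℕ) : k) := ⟨hNk⟩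
  obtain ⟨ω, hω⟩ := HasEnoughRootsOfUnity.exists_primitiveRoot k N
  -- the cyclic group of units and a generator
  obtain ⟨u, hu⟩ := IsCyclic.exists_monoid_generator (α := Fˣ)
  have hcardU : Fintype.card Fˣ = N := by
    rw [Fintype.card_units, hF]
  -- the subgroup of determinant-one elements
  set S : Subgroup (Matrix.GeneralLinearGroup (Fin n) F) :=
    MonoidHom.ker (Matrix.GeneralLinearGroup.det) with hSdef
  have hSn : S.Normal := MonoidHom.normal_ker _
  -- a diagonal element of determinant u
  set d : Fin n → F := fun i => if i = 0 then (u : F) else 1 with hddef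
  set d' : Fin n → F := fun i => if i = 0 then ((u⁻¹ : Fˣ) : F) else 1 with hd'def
  have hdd' : (fun i => d i * d' i) = fun _ : Fin n => (1 : F) := by
    funext i
    by_cases h : i = 0 <;> simp [hddef, hd'def, h]
  have hd'd : (fun i => d' i * d i) = fun _ : Fin n => (1 : F) := by
    funext i
    by_cases h : i = 0 <;> simp [hddef, hd'def, h]
  set g₀ : Matrix.GeneralLinearGroup (Fin n) F :=
    ⟨Matrix.diagonal d, Matrix.diagonal d',
      by rw [Matrix.diagonal_mul_diagonal, hdd', Matrix.diagonal_one],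
      by rw [Matrix.diagonal_mul_diagonal, hd'd, Matrix.diagonal_one]⟩ with hg₀def
  have hdetg₀ : Matrix.GeneralLinearGroup.det g₀ = u := by
    apply Units.ext
    show (Matrix.diagonal d).det = (u : F)
    rw [Matrix.det_diagonal]
    simp [hddef]
  have hg₀S : ∀ g : Matrix.GeneralLinearGroup (Fin n) F, ∃ m : ℕ, g * (g₀ ^ m)⁻¹ ∈ S := by
    intro g
    obtain ⟨m, hm⟩ := hu (Matrix.GeneralLinearGroup.det g)
    refine ⟨m, ?_⟩
    have hm' : u ^ m = Matrix.GeneralLinearGroup.det g := hm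
    rw [hSdef, MonoidHom.mem_ker, map_mul, map_inv, map_pow, hdetg₀, ← hm']
    group
  have hg₀N : g₀ ^ N ∈ S := by
    rw [hSdef, MonoidHom.mem_ker, map_pow, hdetg₀, ← hcardU]
    exact pow_card_eq_one
  -- translation: elements of S come from the special linear group
  have hSL : ∀ g : Matrix.GeneralLinearGroup (Fin n) F, g ∈ S →
      ∃ s : Matrix.SpecialLinearGroup (Fin n) F, Matrix.SpecialLinearGroup.toGL s = g := by
    intro g hg
    rw [hSdef, MonoidHom.mem_ker] at hg
    have hgdet : (↑g : Matrix (Fin n) (Fin n) F).det = 1 := by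
      have := congrArg (Units.val) hg
      simpa using this
    exact ⟨⟨(↑g : Matrix (Fin n) (Fin n) F), hgdet⟩, Units.ext rfl⟩
  -- the fixed vector and invariant functional
  set n₀ : V := e.symm (1, 0) with hn₀def
  set lam : V →ₗ[k] k := (LinearMap.fst k k P).comp (e : V →ₗ[k] k × P) with hlamdef
  have hlamapp : ∀ x : V, lam x = (e x).1 := by
    intro x; rw [hlamdef]; rfl
  have hlam : lam n₀ = 1 := by
    rw [hlamapp, hn₀def, e.apply_symm_apply]
  have hfix : ∀ g ∈ S, ρ g n₀ = n₀ := by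
    intro g hg
    obtain ⟨s, rfl⟩ := hSL g hg
    apply e.injective
    have h1 := he s n₀
    have hen₀ : e n₀ = (1, 0) := by rw [hn₀def, e.apply_symm_apply]
    rw [show (ρ (Matrix.SpecialLinearGroup.toGL s)) n₀
        = (ρ.comp Matrix.SpecialLinearGroup.toGL) s n₀ from rfl, h1, hen₀]
    simp
  have hinv : ∀ g ∈ S, ∀ x : V, lam (ρ g x) = lam x := by
    intro g hg x
    obtain ⟨s, rfl⟩ := hSL g hg
    rw [hlamapp, hlamapp]
    rw [show (ρ (Matrix.SpecialLinearGroup.toGL s)) x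
        = (ρ.comp Matrix.SpecialLinearGroup.toGL) s x from rfl, he s x]
  exact aux_dim_one ρ hindec N hN hNk ω hω S hSn g₀ hg₀S hg₀N n₀ lam hlam hfix hinv
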